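/- Let E be a directed graph and let H = {v ∈ E^0 : for every λ ∈ E^∞ ∪ Λ*, only finitely many paths in E^∞ ∪ Λ* begin at v and are equivalent to λ}. Then H is a hereditary and saturated subset of E^0. -/

import Mathlib

namespace CKGraph

variable {V E : Type*}

/-- One-step relation: there is an edge from `v` to `w`. -/
def Step (o t : E → V) (v w : V) : Prop := ∃ e, o e = v ∧ t e = w

/-- `Reach o t v w` means `v ≥ w`: there is a (possibly trivial) directed path
from `v` to `w`. -/
def Reach (o t : E → V) (v w : V) : Prop := Relation.ReflTransGen (Step o t) v w

/-- A finite path: consecutive edges are composable. -/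
def IsPath (o t : E → V) (p : List E) : Prop := List.Chain' (fun e f => t e = o f) p

/-- An infinite path. -/
def IsInfPath (o t : E → V) (p : ℕ → E) : Prop := ∀ n, t (p n) = o (p (n + 1))

/-- Tail-equivalence of infinite paths: they eventually share the same tail. -/
def InfEquiv (p q : ℕ → E) : Prop := ∃ j k : ℕ, ∀ r : ℕ, p (j + r) = q (k + r)

/-- The set of vertices occurring in a finite path. -/
def FinPathVerts (o t : E → V) (p : List E) : Set V := {v | ∃ e ∈ p, o e = v ∨ t e = v}

/-- The set of vertices occurring in an infinite path. -/
def InfPathVerts (o t : E → V) (p : ℕ → E) : Set V := {v | ∃ n, o (p n) = v}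

/-- Every vertex emits at most finitely many edges. -/
def RowFinite (o : E → V) : Prop := ∀ v : V, {e : E | o e = v}.Finite

/-- Every vertex emits at least one edge. -/
def NoSinks (o : E → V) : Prop := ∀ v : V, ∃ e : E, o e = v

/-- Condition (M): for every vertex `v` and every infinite path `l`, only finitely
many infinite paths begin at `v` and are equivalent to `l`. -/
def CondM (o t : E → V) : Prop :=
  ∀ (v : V) (l : ℕ → E), IsInfPath o t l →
    {p : ℕ → E | IsInfPath o t p ∧ o (p 0) = v ∧ InfEquiv p l}.Finite

/-- A circuit: a finite path of positive length whose origin and terminus agree. -/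
def IsCircuit (o t : E → V) (p : List E) : Prop :=
  IsPath o t p ∧ ∃ h : p ≠ [], o (p.head h) = t (p.getLast h)

/-- An exit of a circuit: an edge not on the circuit whose origin is a vertex of
the circuit. -/
def IsExit (o t : E → V) (p : List E) (e : E) : Prop :=
  e ∉ p ∧ o e ∈ FinPathVerts o t p

/-- A terminal circuit: a circuit with no exit. -/
def TerminalCircuit (o t : E → V) (p : List E) : Prop :=
  IsCircuit o t p ∧ ∀ e : E, ¬ IsExit o t p e

/-- A transitory circuit: a circuit with an exit, none of whose exits gets back
to the circuit. -/
def TransitoryCircuit (o t : E → V) (p : List E) : Prop :=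
  IsCircuit o t p ∧ (∃ e : E, IsExit o t p e) ∧
    ∀ e : E, IsExit o t p e → ∀ w ∈ FinPathVerts o t p, ¬ Reach o t (t e) w

/-- The set of vertices of the infinite path `l` that emit multiple edges
returning to `l`; its cardinality is `N_l`. -/
def ReturnVerts (o t : E → V) (l : ℕ → E) : Set V :=
  {v | v ∈ InfPathVerts o t l ∧ ∃ e f : E, e ≠ f ∧ o e = v ∧ o f = v ∧
    (∃ w ∈ InfPathVerts o t l, Reach o t (t e) w) ∧
    (∃ w ∈ InfPathVerts o t l, Reach o t (t f) w)}

/-- A maximal tail. -/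
def MaximalTail (o t : E → V) (γ : Set V) : Prop :=
  γ.Nonempty ∧
  (∀ v₁ ∈ γ, ∀ v₂ ∈ γ, ∃ z ∈ γ, Reach o t v₁ z ∧ Reach o t v₂ z) ∧
  (∀ v ∈ γ, ∃ e : E, o e = v ∧ t e ∈ γ) ∧
  (∀ v w : V, Reach o t v w → w ∈ γ → v ∈ γ)

/-- The edge set of the induced subgraph `Graph(γ)`. -/
def edgesIn (o t : E → V) (γ : Set V) : Set E := {e | o e ∈ γ ∧ t e ∈ γ}

/-- One-step relation in the subgraph with edge set `S`. -/
def StepIn (o t : E → V) (S : Set E) (v w : V) : Prop := ∃ e ∈ S, o e = v ∧ t e = w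

/-- Reachability inside the subgraph with edge set `S`. -/
def ReachIn (o t : E → V) (S : Set E) (v w : V) : Prop :=
  Relation.ReflTransGen (StepIn o t S) v w

/-- `H` is saturated in the subgraph with vertex set `V0` and edge set `E0`:
every non-singular vertex of the subgraph all of whose successors lie in `H`
belongs to `H`. -/
def SaturatedIn (o t : E → V) (V0 : Set V) (E0 : Set E) (H : Set V) : Prop :=
  ∀ v ∈ V0, (∃ e ∈ E0, o e = v) → {e ∈ E0 | o e = v}.Finite →
    (∀ e ∈ E0, o e = v → t e ∈ H) → v ∈ H

/-- The saturation of `S` in the subgraph `(V0, E0)`: the smallest subset of `V0`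
containing `S` which is saturated in the subgraph. -/
def saturationIn (o t : E → V) (V0 : Set V) (E0 : Set E) (S : Set V) : Set V :=
  ⋂₀ {H : Set V | S ⊆ H ∧ H ⊆ V0 ∧ SaturatedIn o t V0 E0 H}

/-- A hereditary subset of vertices. -/
def Hereditary (o t : E → V) (H : Set V) : Prop :=
  ∀ v ∈ H, ∀ w : V, Reach o t v w → w ∈ H

/-- A singular vertex: a sink or an infinite emitter. -/
def Singular (o : E → V) (v : V) : Prop :=
  (¬ ∃ e : E, o e = v) ∨ {e : E | o e = v}.Infinite

/-- A saturated subset of vertices: every non-singular vertex all of whose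
successors lie in `H` belongs to `H`. -/
def Saturated (o t : E → V) (H : Set V) : Prop :=
  ∀ v : V, ¬ Singular o v → (∀ e : E, o e = v → t e ∈ H) → v ∈ H

/-- The saturation of `S`: the smallest saturated set containing `S`. -/
def saturation (o t : E → V) (S : Set V) : Set V :=
  ⋂₀ {H : Set V | S ⊆ H ∧ Saturated o t H}


/-- A `Λ*`-path: a finite path `p` ending at the singular vertex `v` (for the
empty path, the path is the vertex `v` itself). -/
def IsLamStar (o t : E → V) (p : List E) (v : V) : Prop :=
  IsPath o t p ∧ (∀ h : p ≠ [], t (p.getLast h) = v) ∧ Singular o v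

/-- The origin of a finite path recorded together with its terminus vertex. -/
def finOrigin (o : E → V) (p : List E) (v : V) : V :=
  match p with
  | [] => v
  | e :: _ => o e

/-- Generalized paths: elements of `E^∞ ∪ Λ*`.  A finite path is recorded as a
list of edges together with its terminus vertex. -/
def IsGP (o t : E → V) : (List E × V) ⊕ (ℕ → E) → Prop
  | Sum.inl pv => IsLamStar o t pv.1 pv.2
  | Sum.inr q => IsInfPath o t q

/-- The origin of a generalized path. -/
def GPOrigin (o : E → V) : (List E × V) ⊕ (ℕ → E) → V
  | Sum.inl pv => finOrigin o pv.1 pv.2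
  | Sum.inr q => o (q 0)

/-- Equivalence of generalized paths: two finite paths are equivalent iff they
have the same terminus; two infinite paths are equivalent iff they share a tail;
a finite path is never equivalent to an infinite one. -/
def GPEquiv : (List E × V) ⊕ (ℕ → E) → (List E × V) ⊕ (ℕ → E) → Prop
  | Sum.inl pv, Sum.inl qw => pv.2 = qw.2
  | Sum.inr p, Sum.inr q => InfEquiv p q
  | _, _ => False

/-- The condition defining `H`: for every `lam ∈ E^∞ ∪ Λ*`, only finitely many
members of `E^∞ ∪ Λ*` begin at `v` and are equivalent to `lam`. -/
def GPCondAt (o t : E → V) (v : V) : Prop :=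
  ∀ lam : (List E × V) ⊕ (ℕ → E), IsGP o t lam →
    {μ : (List E × V) ⊕ (ℕ → E) |
      IsGP o t μ ∧ GPOrigin o μ = v ∧ GPEquiv μ lam}.Finite


/-- Prepend an edge to a generalized path. -/
def prependGP (e : E) : (List E × V) ⊕ (ℕ → E) → (List E × V) ⊕ (ℕ → E)
  | Sum.inl pv => Sum.inl (e :: pv.1, pv.2)
  | Sum.inr q => Sum.inr (fun n => match n with | 0 => e | Nat.succ m => q m)

lemma prependGP_injective (e : E) :
    Function.Injective (prependGP (V := V) e) := by
  intro μ ν h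
  cases μ with
  | inl pv =>
    cases ν with
    | inl qw =>
      simp only [prependGP, Sum.inl.injEq, Prod.ext_iff, List.cons.injEq] at h
      cases pv; cases qw
      simp_all
    | inr q => simp [prependGP] at h
  | inr p =>
    cases ν with
    | inl qw => simp [prependGP] at h
    | inr q =>
      simp only [prependGP, Sum.inr.injEq] at h
      exact congrArg Sum.inr (funext fun n => congrFun h (n + 1))

lemma prependGP_props (o t : E → V) (e : E)
    (lam μ : (List E × V) ⊕ (ℕ → E)) (h : IsGP o t μ)
    (ho : GPOrigin o μ = t e) (heq : GPEquiv μ lam) :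
    IsGP o t (prependGP e μ) ∧ GPOrigin o (prependGP e μ) = o e ∧
      GPEquiv (prependGP e μ) lam := by
  cases μ with
  | inl pv =>
    obtain ⟨p, x⟩ := pv
    obtain ⟨hpath, hlast, hsing⟩ := h
    refine ⟨⟨?_, ?_, hsing⟩, rfl, ?_⟩
    · cases p with
      | nil => exact List.isChain_singleton e
      | cons f p' =>
        refine List.isChain_cons_cons.mpr ⟨?_, hpath⟩
        simpa [GPOrigin, finOrigin] using ho.symm
    · intro _
      cases p with
      | nil =>
        simpa [GPOrigin, finOrigin] using ho.symm
      | cons f p' =>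
        simpa [List.getLast] using hlast (by simp)
    · cases lam with
      | inl qw => exact heq
      | inr q => exact heq
  | inr q =>
    refine ⟨?_, rfl, ?_⟩
    · intro n
      cases n with
      | zero => simpa [GPOrigin] using ho.symm
      | succ m => exact h m
    · cases lam with
      | inl qw => exact heq
      | inr ql =>
        obtain ⟨j, k, hjk⟩ := heq
        exact ⟨j + 1, k, fun r => by
          have : j + 1 + r = (j + r) + 1 := by ring
          rw [this]
          exact hjk r⟩

lemma decompGP (o t : E → V) (v : V) (hns : ¬ Singular o v)
    (μ : (List E × V) ⊕ (ℕ → E)) (h : IsGP o t μ) (ho : GPOrigin o μ = v) :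
    ∃ e ν, o e = v ∧ μ = prependGP e ν ∧ IsGP o t ν ∧ GPOrigin o ν = t e ∧
      ∀ lam, GPEquiv μ lam → GPEquiv ν lam := by
  cases μ with
  | inl pv =>
    obtain ⟨p, x⟩ := pv
    obtain ⟨hpath, hlast, hsing⟩ := h
    cases p with
    | nil =>
      exfalso
      apply hns
      simpa [GPOrigin, finOrigin] using ho ▸ hsing
    | cons e p' =>
      have hoe : o e = v := by simpa [GPOrigin, finOrigin] using ho
      refine ⟨e, Sum.inl (p', x), hoe, rfl, ⟨List.isChain_cons.mp hpath |>.2, ?_, hsing⟩,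
        ?_, ?_⟩
      · intro hne
        have := hlast (by simp)
        rwa [List.getLast_cons hne] at this
      · cases p' with
        | nil =>
          have := hlast (by simp)
          simpa [GPOrigin, finOrigin, List.getLast] using this.symm
        | cons f p'' =>
          have := List.isChain_cons_cons.mp hpath |>.1
          simpa [GPOrigin, finOrigin] using this.symm
      · intro lam heq
        cases lam with
        | inl qw => exact heq
        | inr q => exact heq
  | inr q =>
    refine ⟨q 0, Sum.inr (fun n => q (n + 1)), ho, ?_, fun n => h (n + 1), (h 0).symm, ?_⟩
    · refine congrArg Sum.inr (funext fun n => ?_)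
      cases n <;> rfl
    · intro lam heq
      cases lam with
      | inl qw => exact heq
      | inr ql =>
        obtain ⟨j, k, hjk⟩ := heq
        refine ⟨j, k + 1, fun r => ?_⟩
        have h1 : j + (r + 1) = (j + r) + 1 := by ring
        have h2 : k + 1 + r = k + (r + 1) := by ring
        rw [h2, ← hjk (r + 1), h1]

lemma gpcond_step (o t : E → V) (e : E) (hv : GPCondAt o t (o e)) :
    GPCondAt o t (t e) := by
  intro lam hlam
  have hfin := hv lam hlam
  apply Set.Finite.of_finite_image (f := prependGP e) _ (prependGP_injective e).injOn
  apply hfin.subset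
  rintro _ ⟨μ, ⟨h1, h2, h3⟩, rfl⟩
  exact prependGP_props o t e lam μ h1 h2 h3

/-- The set `H` of vertices `v` such that for every
`lam ∈ E^∞ ∪ Λ*` only finitely many members of `E^∞ ∪ Λ*` begin at `v` and are
equivalent to `lam` is hereditary and saturated. -/
theorem stmt6 [Countable V] [Countable E] (o t : E → V) :
    Hereditary o t {v : V | GPCondAt o t v} ∧
    Saturated o t {v : V | GPCondAt o t v} := by
  constructor
  · intro v hv w hreach
    induction hreach with
    | refl => exact hv
    | tail _ hstep ih =>
      obtain ⟨e, he1, he2⟩ := hstep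
      have h1 : GPCondAt o t (o e) := by rw [he1]; exact ih
      have h2 := gpcond_step o t e h1
      show GPCondAt o t _
      rw [← he2]; exact h2
  · intro v hns hsucc lam hlam
    have hEfin : {e : E | o e = v}.Finite := by
      rw [← Set.not_infinite]
      intro h
      exact hns (Or.inr h)
    have hsub : {μ : (List E × V) ⊕ (ℕ → E) |
        IsGP o t μ ∧ GPOrigin o μ = v ∧ GPEquiv μ lam} ⊆
        ⋃ e ∈ {e : E | o e = v}, prependGP e ''
          {μ | IsGP o t μ ∧ GPOrigin o μ = t e ∧ GPEquiv μ lam} := by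
      rintro μ ⟨h1, h2, h3⟩
      obtain ⟨e, ν, hoe, hμ, hν1, hν2, hν3⟩ := decompGP o t v hns μ h1 h2
      exact Set.mem_biUnion hoe ⟨ν, ⟨hν1, hν2, hν3 lam (hμ ▸ h3)⟩, hμ.symm⟩
    exact Set.Finite.subset
      (Set.Finite.biUnion hEfin fun e he =>
        Set.Finite.image _ (hsucc e he lam hlam)) hsub


end CKGraph
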